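/- Let f be a differentiable concave function on an open convex cone Γ ⊆ ℝⁿ with f > 0 on Γ and f → 0 on ∂Γ (i.e., f(λ) → 0 as λ → any boundary point). Then f_i(λ) ≥ 0 for all i and ∑_{i=1}^n f_i(λ)λ_i ≥ 0 for all λ ∈ Γ. -/

import Mathlib

open Finset Filter Topology

/-- The i-th partial derivative `f_i(x) = ∂f/∂x_i (x)`. -/
noncomputable def pd {n : ℕ} (f : (Fin n → ℝ) → ℝ) (x : Fin n → ℝ) (i : Fin n) : ℝ :=
  fderiv ℝ f x (Pi.single i 1)

/-- The set of values `t_λ = (∑ f_i(λ) λ_i)/(∑ f_j(λ))` over the level set `∂Γ^σ`. -/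
def tset {n : ℕ} (Γ : Set (Fin n → ℝ)) (f : (Fin n → ℝ) → ℝ) (σ : ℝ) : Set ℝ :=
  {t : ℝ | ∃ x ∈ Γ, f x = σ ∧ t = (∑ i, pd f x i * x i) / (∑ i, pd f x i)}

/-- The cone `Γ_{σ,f} = { t (λ - τ 𝟏) : λ ∈ ∂Γ^σ, t > 0 }`. -/
def lcone {n : ℕ} (Γ : Set (Fin n → ℝ)) (f : (Fin n → ℝ) → ℝ) (σ τ : ℝ) :
    Set (Fin n → ℝ) :=
  {y | ∃ x ∈ Γ, f x = σ ∧ ∃ t : ℝ, 0 < t ∧ y = t • (x - fun _ => τ)}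

/-- The set of `k` such that some vector with the first `k` coordinates negative and
the remaining coordinates positive belongs to `C`; `κ_C` is its greatest element. -/
def kset {n : ℕ} (C : Set (Fin n → ℝ)) : Set ℕ :=
  {k : ℕ | ∃ α : Fin n → ℝ, (∀ i, 0 < α i) ∧
    (fun i : Fin n => if (i : ℕ) < k then -α i else α i) ∈ C}

lemma key_lemma {n : ℕ} (Γ : Set (Fin n → ℝ)) (f : (Fin n → ℝ) → ℝ)
    (hconc : ConcaveOn ℝ Γ f) (hpos : ∀ x ∈ Γ, 0 < f x)
    (x : Fin n → ℝ) (hx : x ∈ Γ) (hdx : DifferentiableAt ℝ f x)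
    (v : Fin n → ℝ) (hv : ∀ t : ℝ, 0 < t → x + t • v ∈ Γ) :
    0 ≤ fderiv ℝ f x v := by
  by_contra hc
  push_neg at hc
  set c := fderiv ℝ f x v with hc_def
  set g : ℝ → ℝ := fun t => f (x + t • v) with hg_def
  have hmem : ∀ t : ℝ, 0 ≤ t → x + t • v ∈ Γ := by
    intro t ht
    rcases ht.eq_or_lt with rfl | h
    · simpa using hx
    · exact hv t h
  -- g is concave on Ici 0
  have hg : ConcaveOn ℝ (Set.Ici (0:ℝ)) g := by
    have hA := hconc.comp_affineMap (AffineMap.lineMap (x : Fin n → ℝ) (x + v))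
    refine (hA.subset (fun t ht => ?_) (convex_Ici 0)).congr ?_ |>.subset (fun t ht => ht) (convex_Ici 0)
    · simp only [Set.mem_preimage, AffineMap.coe_lineMap]
      simpa [AffineMap.lineMap_apply, add_comm, add_sub_cancel_left] using hmem t ht
    · intro t ht
      simp [AffineMap.lineMap_apply, hg_def, add_comm]
  -- derivative of g at 0 is c
  have hd : HasDerivAt g c 0 := by
    have h1 : HasDerivAt (fun t : ℝ => x + t • v) v 0 := by
      simpa using ((hasDerivAt_id (0:ℝ)).smul_const v).const_add x
    have h0 : HasFDerivAt f (fderiv ℝ f x) (x + (0:ℝ) • v) := by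
      simpa using hdx.hasFDerivAt
    have h2 := h0.comp_hasDerivAt 0 h1
    exact h2
  -- slope bound
  have hslope : ∀ t : ℝ, 0 < t → g t ≤ g 0 + t * c := by
    intro t ht
    have htend : Tendsto (slope g 0) (𝓝[>] 0) (𝓝 c) :=
      (hasDerivAt_iff_tendsto_slope.mp hd).mono_left
        (nhdsWithin_mono _ (fun s hs => ne_of_gt hs))
    have hev : ∀ᶠ s in 𝓝[>] (0:ℝ), slope g 0 t ≤ slope g 0 s := by
      filter_upwards [Ioo_mem_nhdsGT_of_mem ⟨le_refl (0:ℝ), ht⟩] with s hs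
      have := (hg.neg.secant_mono (Set.self_mem_Ici) (Set.mem_Ici.mpr hs.1.le)
        (Set.mem_Ici.mpr ht.le) (ne_of_gt hs.1) (ne_of_gt ht) hs.2.le)
      simp only [Pi.neg_apply] at this
      rw [slope_def_field, slope_def_field]
      have hs0 := hs.1
      simp only [sub_zero] at this ⊢
      rw [div_le_div_iff₀ hs0 ht] at this
      rw [div_le_div_iff₀ ht hs0]
      nlinarith
    have := ge_of_tendsto htend hev
    rw [slope_def_field, sub_zero, div_le_iff₀ ht] at this
    linarith [this]
  -- contradiction
  have hgpos : 0 < g 0 := by simpa [hg_def] using hpos x hx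
  set t := (g 0 + 1) / (-c) with ht_def
  have htp : 0 < t := div_pos (by linarith) (by linarith)
  have h1 : g t ≤ g 0 + t * c := hslope t htp
  have h4 : t * -c = g 0 + 1 := div_mul_cancel₀ _ (by linarith)
  have h3 : 0 < g t := hpos _ (hv t htp)
  nlinarith

theorem stmt14 {n : ℕ} (Γ : Set (Fin n → ℝ)) (f : (Fin n → ℝ) → ℝ)
    (hopen : IsOpen Γ) (hconv : Convex ℝ Γ)
    (hcone : ∀ x ∈ Γ, ∀ t : ℝ, 0 < t → t • x ∈ Γ)
    (horth : {x : Fin n → ℝ | ∀ i, 0 < x i} ⊆ Γ)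
    (hbdry : (frontier Γ).Nonempty)
    (hconc : ConcaveOn ℝ Γ f)
    (hdiff : ∀ x ∈ Γ, DifferentiableAt ℝ f x)
    (hpos : ∀ x ∈ Γ, 0 < f x)
    (hzero : ∀ x ∈ frontier Γ, Filter.Tendsto f (𝓝[Γ] x) (𝓝 0)) :
    ∀ lam ∈ Γ, (∀ i : Fin n, 0 ≤ pd f lam i) ∧ 0 ≤ ∑ i, pd f lam i * lam i := by
  
  intro lam hlam
  have hadd : ∀ a ∈ Γ, ∀ b ∈ Γ, a + b ∈ Γ := by
    intro a ha b hb
    have h := hconv ha hb (by norm_num : (0:ℝ) ≤ 1/2) (by norm_num : (0:ℝ) ≤ 1/2) (by norm_num)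
    have h2 := hcone _ h 2 (by norm_num)
    convert h2 using 1
    module
  constructor
  · intro i
    obtain ⟨ε, hε, hball⟩ := Metric.isOpen_iff.mp hopen lam hlam
    have hmem2 : lam - (ε/2) • (fun _ => (1:ℝ)) ∈ Γ := by
      apply hball
      rw [Metric.mem_ball, dist_eq_norm, sub_sub_cancel_left, norm_neg]
      calc ‖(ε/2) • (fun _ => (1:ℝ))‖ ≤ ε/2 := by
            apply pi_norm_le_iff_of_nonneg (by linarith) |>.mpr
            intro j
            simp [abs_of_pos hε]
        _ < ε := by linarith
    exact key_lemma Γ f hconc hpos lam hlam (hdiff lam hlam) (Pi.single i 1) (by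
      intro t ht
      have hp := hadd _ hmem2 ((ε/2) • ((fun _ => 1) : Fin n → ℝ) + t • (Pi.single i 1 : Fin n → ℝ))
        (horth (by
          intro j
          simp only [Set.mem_setOf_eq, Pi.add_apply, Pi.smul_apply, smul_eq_mul, mul_one,
            Pi.single_apply]
          by_cases h : j = i <;> simp [h] <;> positivity))
      convert hp using 1
      module)
  · have hv : ∀ t : ℝ, 0 < t → lam + t • lam ∈ Γ := by
      intro t ht
      have h2 := hcone lam hlam (1+t) (by linarith)
      convert h2 using 1
      module
    have h := key_lemma Γ f hconc hpos lam hlam (hdiff lam hlam) lam hv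
    have heq : (fderiv ℝ f lam) lam = ∑ i, pd f lam i * lam i := by
      set F := fderiv ℝ f lam with hF
      have h1 : F lam = F (∑ i, lam i • (fun j => if i = j then (1:ℝ) else 0)) := by
        rw [← pi_eq_sum_univ]
      rw [h1, map_sum]
      refine Finset.sum_congr rfl fun i _ => ?_
      have hsingle : (fun j => if i = j then (1:ℝ) else 0) = Pi.single i 1 := by
        funext j
        rw [Pi.single_apply]
        by_cases h : i = j <;> simp [h, Ne.symm, eq_comm]
      rw [map_smul, hsingle]
      simp [pd, ← hF, mul_comm]
    linarith [heq ▸ h]
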